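/- arXiv:2010.13945 — 3 statements merged into one kernel-verified Lean document; each statement's English description precedes it below -/
import Mathlib

section
/- Let N ≥ 2, let p = (p_1,…,p_N) ∈ ℝ^N, and let K be the N×N symmetric matrix with entries K_ij = p_j δ_{iN} + p_i δ_{jN} − p_N δ_{ij} (i.e., K_ij = −p_N δ_{ij} for i,j < N, K_Nj = p_j for j < N, K_iN = p_i for i < N, and K_NN = p_N). Then the characteristic polynomial of K satisfies det(K − γI) = (−1)^N (γ + p_N)^{N−2}(γ² − |p|²). -/
open Finset

/-- The matrix `K(p)` with `K i j = p j δ_{iN} + p i δ_{jN} - p N δ_{ij}`. -/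
def Kmat {n : ℕ} (p : Fin (n + 1) → ℝ) : Matrix (Fin (n + 1)) (Fin (n + 1)) ℝ :=
  Matrix.of fun i j =>
    (if i = Fin.last n then p j else 0) + (if j = Fin.last n then p i else 0)
      - (if i = j then p (Fin.last n) else 0)

lemma Kmat_sub_apply {n : ℕ} (p : Fin (n + 1) → ℝ) (γ : ℝ) (i j : Fin (n + 1)) :
    (Kmat p - γ • (1 : Matrix (Fin (n + 1)) (Fin (n + 1)) ℝ)) i j =
      (if i = Fin.last n then p j else 0) + (if j = Fin.last n then p i else 0)
        - (if i = j then p (Fin.last n) + γ else 0) := by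
  simp only [Matrix.sub_apply, Matrix.smul_apply, Matrix.one_apply, Kmat, Matrix.of_apply,
    smul_eq_mul]
  split_ifs <;> ring

/-- Auxiliary row-operation matrix. -/
def Amat {n : ℕ} (p : Fin (n + 2) → ℝ) (γ : ℝ) : Matrix (Fin (n + 2)) (Fin (n + 2)) ℝ :=
  Matrix.of fun i j =>
    if i = Fin.last (n + 1) then (if j = Fin.last (n + 1) then γ + p j else p j)
    else (if i = j then 1 else 0)

lemma Amat_det {n : ℕ} (p : Fin (n + 2) → ℝ) (γ : ℝ) :
    (Amat p γ).det = γ + p (Fin.last (n + 1)) := by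
  rw [Matrix.det_of_lowerTriangular]
  · rw [Fin.prod_univ_castSucc]
    have h1 : ∀ i : Fin (n + 1), Amat p γ i.castSucc i.castSucc = 1 := by
      intro i
      simp [Amat, (Fin.castSucc_lt_last i).ne]
    have h2 : Amat p γ (Fin.last (n + 1)) (Fin.last (n + 1)) = γ + p (Fin.last (n + 1)) := by
      simp [Amat]
    simp only [h1, h2, Finset.prod_const_one, one_mul]
  · intro i j hij
    have hij' : (i : Fin (n + 2)) < j := hij
    have hi : i ≠ Fin.last (n + 1) := Fin.ne_last_of_lt hij'
    simp [Amat, hi, hij'.ne]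

lemma Kmat_base (p : Fin 2 → ℝ) (γ : ℝ) :
    (Kmat p - γ • (1 : Matrix (Fin 2) (Fin 2) ℝ)).det = γ ^ 2 - (p 0 ^ 2 + p 1 ^ 2) := by
  rw [Matrix.det_fin_two]
  simp only [Kmat_sub_apply]
  have h1L : (1 : Fin 2) = Fin.last 1 := rfl
  rw [← h1L]
  norm_num
  ring

lemma Kmat_degen (m : ℕ) (p : Fin (m + 3) → ℝ) (γ : ℝ)
    (hγ : γ + p (Fin.last (m + 2)) = 0) :
    (Kmat p - γ • (1 : Matrix (Fin (m + 3)) (Fin (m + 3)) ℝ)).det = 0 := by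
  set M := Kmat p - γ • (1 : Matrix (Fin (m + 3)) (Fin (m + 3)) ℝ) with hMdef
  set L := Fin.last (m + 2) with hL
  set i0 : Fin (m + 3) := ⟨0, by omega⟩ with hi0
  set i1 : Fin (m + 3) := ⟨1, by omega⟩ with hi1
  have h0L : i0 ≠ L := by simp [hi0, hL, Fin.ext_iff]
  have h1L : i1 ≠ L := by simp [hi1, hL, Fin.ext_iff]
  have h01 : i0 ≠ i1 := by simp [hi0, hi1, Fin.ext_iff]
  have hrow : ∀ i : Fin (m + 3), i ≠ L → ∀ j, M i j = if j = L then p i else 0 := by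
    intro i hi j
    rw [hMdef, Kmat_sub_apply, ← hL]
    rcases eq_or_ne i j with rfl | hij
    · simp only [if_neg hi, if_true]
      linarith
    · simp [hi, hij]
  rcases eq_or_ne (p i0) 0 with hp0 | hp0
  · apply Matrix.det_eq_zero_of_row_eq_zero i0
    intro j
    rw [hrow i0 h0L j, hp0]
    simp
  · have hM1 : M i1 = (p i1 / p i0) • M i0 := by
      funext j
      simp only [Pi.smul_apply, smul_eq_mul]
      rw [hrow i1 h1L j, hrow i0 h0L j]
      split_ifs
      · field_simp
      · ring
    calc M.det = (M.updateRow i1 ((p i1 / p i0) • M i0)).det := by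
          rw [← hM1, Matrix.updateRow_eq_self]
      _ = (p i1 / p i0) * (M.updateRow i1 (M i0)).det := by
          rw [← Matrix.det_updateRow_smul]
      _ = 0 := by
          rw [Matrix.det_zero_of_row_eq h01.symm, mul_zero]
          rw [Matrix.updateRow_self, Matrix.updateRow_ne h01]

lemma Kmat_generic (n : ℕ) (p : Fin (n + 2) → ℝ) (γ : ℝ)
    (hγ : γ + p (Fin.last (n + 1)) ≠ 0) :
    (Kmat p - γ • (1 : Matrix (Fin (n + 2)) (Fin (n + 2)) ℝ)).det =
      (-1 : ℝ) ^ (n + 2) * (γ + p (Fin.last (n + 1))) ^ n *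
        (γ ^ 2 - ∑ i, p i ^ 2) := by
  set L := Fin.last (n + 1) with hL
  set M := Kmat p - γ • (1 : Matrix (Fin (n + 2)) (Fin (n + 2)) ℝ) with hMdef
  have hM : ∀ i j, M i j =
      (if i = L then p j else 0) + (if j = L then p i else 0)
        - (if i = j then p L + γ else 0) := fun i j => Kmat_sub_apply p γ i j
  have hUentry : ∀ j, (Amat p γ * M) L j =
      if j = L then (∑ i, p i ^ 2) - γ ^ 2 else 0 := by
    intro j
    rw [Matrix.mul_apply]
    have hA : ∀ k : Fin (n + 2), Amat p γ L k =
        if k = L then γ + p k else p k := by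
      intro k; simp [Amat, hL]
    rcases eq_or_ne j L with rfl | hj
    · have hterm : ∀ k : Fin (n + 2),
          Amat p γ L k * M k L =
            p k ^ 2 + (if k = L then (γ + p L) * (p L - γ) - p L ^ 2 else 0) := by
        intro k
        rw [hA k, hM k L]
        rcases eq_or_ne k L with rfl | hk
        · split_ifs <;> ring
        · split_ifs <;> ring
      simp only [hterm]
      rw [Finset.sum_add_distrib, Finset.sum_ite_eq' _ L]
      simp only [Finset.mem_univ, if_true, if_pos rfl]
      ring
    · have hterm : ∀ k : Fin (n + 2),
          Amat p γ L k * M k j =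
            (if k = L then (γ + p L) * p j else 0) +
              (if k = j then -(p j * (p L + γ)) else 0) := by
        intro k
        rw [hA k, hM k j, if_neg hj]
        rcases eq_or_ne k L with rfl | hk
        · simp only [if_true, if_neg (Ne.symm hj)]
          ring
        · rcases eq_or_ne k j with rfl | hkj
          · simp only [if_neg hk, if_true]
            ring
          · simp only [if_neg hk, if_neg hkj]
            ring
      simp only [hterm]
      rw [Finset.sum_add_distrib, Finset.sum_ite_eq' _ L, Finset.sum_ite_eq' _ j]
      simp only [Finset.mem_univ, if_true, if_neg hj]
      ring
  have hUentry' : ∀ i j : Fin (n + 2), i ≠ L → (Amat p γ * M) i j = M i j := by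
    intro i j hi
    rw [Matrix.mul_apply]
    have hA : ∀ k : Fin (n + 2), Amat p γ i k = if i = k then 1 else 0 := by
      intro k; simp [Amat, show i ≠ Fin.last (n + 1) from hi]
    simp only [hA, ite_mul, one_mul, zero_mul]
    rw [Finset.sum_ite_eq _ i]
    simp
  have htri : (Amat p γ * M).det =
      (-(p L + γ)) ^ (n + 1) * ((∑ i, p i ^ 2) - γ ^ 2) := by
    rw [Matrix.det_of_upperTriangular]
    · rw [Fin.prod_univ_castSucc]
      have hdiag : ∀ i : Fin (n + 1),
          (Amat p γ * M) i.castSucc i.castSucc = -(p L + γ) := by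
        intro i
        rw [hUentry' _ _ (Fin.castSucc_lt_last i).ne, hM]
        simp [(Fin.castSucc_lt_last i).ne, hL]
      simp only [hdiag, Finset.prod_const, Finset.card_univ, Fintype.card_fin]
      rw [hUentry L]
      rw [if_pos rfl]
    · intro i j hij
      have hij' : (j : Fin (n + 2)) < i := hij
      rcases eq_or_ne i L with rfl | hi
      · rw [hUentry j, if_neg (Fin.ne_last_of_lt hij')]
      · rw [hUentry' _ _ hi, hM]
        simp [hi, Fin.ne_last_of_lt hij', hij'.ne', show j ≠ L from Fin.ne_last_of_lt hij']
  have hmul : (γ + p L) * M.det =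
      (-(p L + γ)) ^ (n + 1) * ((∑ i, p i ^ 2) - γ ^ 2) := by
    rw [← htri, Matrix.det_mul, Amat_det]
  refine mul_left_cancel₀ hγ (hmul.trans ?_)
  rw [neg_pow, show p L + γ = γ + p L by ring]
  ring

/-- Characteristic polynomial identity:
`det(K - γI) = (-1)^N (γ + p_N)^{N-2} (γ² - |p|²)` for `N = n + 2`. -/
theorem Kmat_char_det (n : ℕ) (p : Fin (n + 2) → ℝ) (γ : ℝ) :
    (Kmat p - γ • (1 : Matrix (Fin (n + 2)) (Fin (n + 2)) ℝ)).det =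
      (-1 : ℝ) ^ (n + 2) * (γ + p (Fin.last (n + 1))) ^ n *
        (γ ^ 2 - ∑ i, p i ^ 2) := by
  rcases eq_or_ne (γ + p (Fin.last (n + 1))) 0 with hγ | hγ
  · match n, p, γ, hγ with
    | 0, p, γ, hγ =>
      rw [Kmat_base p γ, Fin.sum_univ_two]
      norm_num
    | (m + 1), p, γ, hγ =>
      rw [Kmat_degen m p γ hγ, hγ]
      ring
  · exact Kmat_generic n p γ hγ
end

section
/- Let N ≥ 2, p ∈ ℝ^N, and let K be the N×N symmetric matrix with K_ij = −p_N δ_{ij} for i,j < N, K_iN = K_Ni = p_i for i < N, and K_NN = p_N. Then the multiset of eigenvalues of K consists of −p_N with multiplicity N−2, together with −|p| and |p|, where |p| is the Euclidean norm of p. -/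
set_option synthInstance.maxHeartbeats 1000000
set_option maxHeartbeats 1000000
open Polynomial Matrix


open Finset

/-- Euclidean norm of a vector in `ℝ^N`. -/
noncomputable def enorm {N : ℕ} (p : Fin N → ℝ) : ℝ :=
  Real.sqrt (∑ i, p i ^ 2)

theorem Kmat_charpoly (n : ℕ) (p : Fin (n + 2) → ℝ) :
    (Kmat p).charpoly
      = (X + C (p (Fin.last (n + 1)))) ^ n * (X ^ 2 - C (∑ i, p i ^ 2)) := by
  set a := p (Fin.last (n + 1)) with ha
  set S := ∑ i, p i ^ 2 with hS
  set φ : ℝ[X] →+* RatFunc ℝ := (algebraMap ℝ[X] (RatFunc ℝ) : ℝ[X] →+* RatFunc ℝ) with hφ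
  have hinj : Function.Injective φ := IsFractionRing.injective ℝ[X] (RatFunc ℝ)
  apply hinj
  set c : ℝ →+* RatFunc ℝ := φ.comp (C : ℝ →+* ℝ[X]) with hc
  set q : RatFunc ℝ := φ (X + C a) with hqdef
  have hq : q ≠ 0 := by
    rw [hqdef]
    intro h
    exact (Polynomial.monic_X_add_C a).ne_zero (hinj (by simpa using h))
  set A : Matrix (Fin (n + 2)) (Fin 2) (RatFunc ℝ) := Matrix.of fun i k =>
    q⁻¹ * (if k = 0 then (if i = Fin.last (n + 1) then 1 else 0) else c (p i)) with hA
  set B : Matrix (Fin 2) (Fin (n + 2)) (RatFunc ℝ) := Matrix.of fun k j =>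
    if k = 0 then c (p j) else (if j = Fin.last (n + 1) then 1 else 0) with hB
  have hqx : q = φ X + c a := by rw [hqdef, map_add]; rfl
  have hAB : ∀ i j, (A * B) i j
      = q⁻¹ * ((if i = Fin.last (n + 1) then c (p j) else 0)
        + (if j = Fin.last (n + 1) then c (p i) else 0)) := by
    intro i j
    rw [Matrix.mul_apply, Fin.sum_univ_two]
    simp only [hA, hB, Matrix.of_apply, if_true, if_false]
    norm_num [mul_ite]
    split_ifs <;> ring
  have hcp : ∀ r : ℝ, φ (C r) = c r := fun _ => rfl
  have claim1 : (charmatrix (Kmat p)).map φ = q • (1 - A * B) := by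
    ext i j
    simp only [Matrix.map_apply, Matrix.smul_apply, Matrix.sub_apply, hAB, charmatrix_apply,
      Matrix.diagonal_apply, Matrix.one_apply, smul_eq_mul, Kmat, Matrix.of_apply,
      map_sub, map_add, hcp]
    by_cases hij : i = j
    · subst hij
      by_cases hi : i = Fin.last (n + 1)
      · subst hi
        simp only [if_pos rfl, if_true]
        field_simp
        try rw [hqx]
        try ring
      · simp only [if_pos rfl, if_true, if_neg hi, _root_.map_zero]
        field_simp
        try ring
        try rw [hqx]
        try ring
    · by_cases hi : i = Fin.last (n + 1) <;> by_cases hj : j = Fin.last (n + 1)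
      · exact absurd (hi.trans hj.symm) hij
      · simp only [if_neg hij, if_pos hi, if_neg hj, _root_.map_zero]
        field_simp
        try ring
      · simp only [if_neg hij, if_pos hj, if_neg hi, _root_.map_zero]
        field_simp
        try ring
      · simp only [if_neg hij, if_neg hi, if_neg hj, _root_.map_zero]
        simp
  have hdet : φ (Kmat p).charpoly = det ((charmatrix (Kmat p)).map φ) := by
    rw [Matrix.charpoly, RingHom.map_det, RingHom.mapMatrix_apply]
  have hBA00 : (B * A) 0 0 = c a * q⁻¹ := by
    rw [Matrix.mul_apply, Fintype.sum_eq_single (Fin.last (n + 1))]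
    · simp [hA, hB, ha]
    · intro j hj; simp [hA, hB, hj]
  have hcS : c S = ∑ j, c (p j) * c (p j) := by
    rw [hS, map_sum]
    exact Finset.sum_congr rfl fun j _ => by rw [sq, RingHom.map_mul]
  have hBA01 : (B * A) 0 1 = q⁻¹ * c S := by
    rw [Matrix.mul_apply, hcS, Finset.mul_sum]
    refine Finset.sum_congr rfl fun j _ => ?_
    simp [hA, hB]
    ring
  have hBA10 : (B * A) 1 0 = q⁻¹ := by
    rw [Matrix.mul_apply, Fintype.sum_eq_single (Fin.last (n + 1))]
    · simp [hA, hB]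
    · intro j hj; simp [hA, hB, hj]
  have hBA11 : (B * A) 1 1 = c a * q⁻¹ := by
    rw [Matrix.mul_apply, Fintype.sum_eq_single (Fin.last (n + 1))]
    · simp [hA, hB, ha]; ring
    · intro j hj; simp [hA, hB, hj]
  have hx : φ X = q - c a := by rw [hqx]; ring
  rw [hdet, claim1, Matrix.det_smul, Matrix.det_one_sub_mul_comm, Matrix.det_fin_two]
  have e00 : ((1 : Matrix (Fin 2) (Fin 2) (RatFunc ℝ)) - B * A) 0 0 = 1 - c a * q⁻¹ := by
    simp [Matrix.sub_apply, Matrix.one_apply, hBA00]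
  have e01 : ((1 : Matrix (Fin 2) (Fin 2) (RatFunc ℝ)) - B * A) 0 1 = -(q⁻¹ * c S) := by
    simp [Matrix.sub_apply, Matrix.one_apply, hBA01]
  have e10 : ((1 : Matrix (Fin 2) (Fin 2) (RatFunc ℝ)) - B * A) 1 0 = -q⁻¹ := by
    simp [Matrix.sub_apply, Matrix.one_apply, hBA10]
  have e11 : ((1 : Matrix (Fin 2) (Fin 2) (RatFunc ℝ)) - B * A) 1 1 = 1 - c a * q⁻¹ := by
    simp [Matrix.sub_apply, Matrix.one_apply, hBA11]
  rw [e00, e01, e10, e11, Fintype.card_fin]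
  rw [φ.map_mul, φ.map_pow, φ.map_sub, φ.map_pow, hcp, hx, ← hqdef]
  field_simp
  ring

theorem charpoly_eq_prod_eig {N : Type*} [Fintype N] [DecidableEq N] (A : Matrix N N ℝ)
    (hA : A.IsHermitian) : A.charpoly = ∏ i, (X - C (hA.eigenvalues i)) := by
  set U : Matrix N N ℝ := (hA.eigenvectorUnitary : Matrix N N ℝ) with hU
  have hUV : U * star U = 1 := (Matrix.mem_unitaryGroup_iff).mp hA.eigenvectorUnitary.2
  have hspec : A = U * Matrix.diagonal hA.eigenvalues * star U := by
    have := hA.spectral_theorem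
    simpa using this
  set D := Matrix.diagonal hA.eigenvalues
  have h2 : (U.map (C : ℝ →+* ℝ[X])) * (star U).map C = 1 := by
    rw [← Matrix.map_mul, hUV]; simp
  have key : charmatrix A = (U.map C) * charmatrix D * ((star U).map C) := by
    rw [charmatrix, charmatrix, hspec]
    simp only [RingHom.mapMatrix_apply]
    rw [Matrix.map_mul, Matrix.map_mul]
    rw [Matrix.mul_sub, Matrix.sub_mul]
    congr 1
    rw [mul_assoc, Matrix.scalar_commute X (fun r => Commute.all X r) _, ← mul_assoc, h2, one_mul]
  have hDchar : D.charpoly = ∏ i, (X - C (hA.eigenvalues i)) := by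
    rw [Matrix.charpoly]
    have : charmatrix D = Matrix.diagonal (fun i => (X : ℝ[X]) - C (hA.eigenvalues i)) := by
      ext i j
      by_cases h : i = j
      · subst h; simp [charmatrix_apply_eq, D]
      · simp [charmatrix_apply_ne _ _ _ h, Matrix.diagonal_apply_ne _ h, D]
    rw [this, Matrix.det_diagonal]
  rw [Matrix.charpoly, key, Matrix.det_mul, Matrix.det_mul, ← Matrix.charpoly, ← hDchar]
  have h3 : (U.map (C : ℝ →+* ℝ[X])).det * ((star U).map C).det = 1 := by
    rw [← Matrix.det_mul, h2, Matrix.det_one]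
  calc (U.map (C : ℝ →+* ℝ[X])).det * D.charpoly * ((star U).map C).det
      = D.charpoly * ((U.map (C : ℝ →+* ℝ[X])).det * ((star U).map C).det) := by ring
    _ = D.charpoly := by rw [h3, mul_one]

/-- The eigenvalues of `K(p)` (with multiplicity) are `-p_N` with multiplicity
`N - 2`, together with `-|p|` and `|p|`, where `N = n + 2`. -/
theorem Kmat_eigenvalues (n : ℕ) (p : Fin (n + 2) → ℝ)
    (hK : (Kmat p).IsHermitian) :
    Finset.univ.val.map hK.eigenvalues =
      Multiset.replicate n (-(p (Fin.last (n + 1)))) + {-(_root_.enorm p), _root_.enorm p} := by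
  set a := p (Fin.last (n + 1)) with ha
  set S := ∑ i, p i ^ 2 with hSdef
  have hS0 : (0:ℝ) ≤ S := Finset.sum_nonneg fun i _ => sq_nonneg _
  set r := _root_.enorm p with hr
  have hrr : r * r = S := Real.mul_self_sqrt hS0
  set T : Multiset ℝ := Multiset.replicate n (-a) + {-r, r} with hT
  have hprodT : (T.map fun x => (X : ℝ[X]) - C x).prod = (Kmat p).charpoly := by
    rw [Kmat_charpoly, hT]
    rw [Multiset.map_add, Multiset.prod_add, Multiset.map_replicate, Multiset.prod_replicate]
    have h1 : (X : ℝ[X]) - C (-a) = X + C a := by rw [map_neg]; ring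
    have h2 : (({-r, r} : Multiset ℝ).map fun x => (X : ℝ[X]) - C x).prod
        = (X - C (-r)) * (X - C r) := by
      simp [Multiset.map_cons, Multiset.prod_cons]
    rw [h1, h2]
    congr 1
    rw [map_neg]
    have : (C r : ℝ[X]) * C r = C S := by rw [← C_mul, hrr]
    ring_nf
    rw [← this]
    ring
  have hprodE : ((Finset.univ.val.map hK.eigenvalues).map fun x => (X : ℝ[X]) - C x).prod
      = (Kmat p).charpoly := by
    rw [charpoly_eq_prod_eig _ hK, Finset.prod, Multiset.map_map]
    rfl
  have := congrArg Polynomial.roots (hprodE.trans hprodT.symm)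
  rwa [Polynomial.roots_multiset_prod_X_sub_C, Polynomial.roots_multiset_prod_X_sub_C] at this
end

section
/- Let 0 < λ ≤ Λ and define the Pucci minimal operator on real symmetric N×N matrices by M⁻(M) = λ·(sum of positive eigenvalues of M) + Λ·(sum of negative eigenvalues of M). Let p ∈ ℝ^N and let K be the symmetric matrix with K_ij = −p_N δ_{ij} for i,j < N, K_iN = K_Ni = p_i for i < N, K_NN = p_N. Then M⁻(K) ≥ −Λ(N−1)|p|. -/
open Finset

open Matrix

lemma Kmat_mulVec {n : ℕ} (p : Fin (n + 1) → ℝ) (v : Fin (n + 1) → ℝ) (i : Fin (n + 1)) :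
    ((Kmat p) *ᵥ v) i =
      (if i = Fin.last n then ∑ j, p j * v j else 0) + p i * v (Fin.last n)
        - p (Fin.last n) * v i := by
  simp only [Matrix.mulVec, dotProduct, Kmat, Matrix.of_apply, add_mul, sub_mul,
    ite_mul, zero_mul, Finset.sum_add_distrib, Finset.sum_sub_distrib]
  rw [Finset.sum_ite_eq' Finset.univ (Fin.last n) (fun j => p i * v j),
    Finset.sum_ite_eq Finset.univ i (fun j => p (Fin.last n) * v j)]
  simp


lemma Kmat_quadForm {n : ℕ} (p : Fin (n + 1) → ℝ) (v : Fin (n + 1) → ℝ) :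
    v ⬝ᵥ ((Kmat p) *ᵥ v) =
      2 * v (Fin.last n) * (∑ j, p j * v j) - p (Fin.last n) * ∑ i, v i ^ 2 := by
  simp only [dotProduct, Kmat_mulVec]
  rw [Finset.sum_congr rfl (fun i _ => by split <;> ring :
    ∀ i ∈ Finset.univ, v i * ((if i = Fin.last n then ∑ j, p j * v j else 0)
        + p i * v (Fin.last n) - p (Fin.last n) * v i) =
      (if i = Fin.last n then v i * ∑ j, p j * v j else 0)
        + v (Fin.last n) * (p i * v i) - p (Fin.last n) * v i ^ 2)]
  simp only [Finset.sum_sub_distrib, Finset.sum_add_distrib, ← Finset.mul_sum,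
    Finset.sum_ite_eq' Finset.univ (Fin.last n) (fun i => v i * ∑ j, p j * v j)]
  simp
  ring

lemma Kmat_quadForm_ge {n : ℕ} (p v : Fin (n + 2) → ℝ) :
    v ⬝ᵥ ((Kmat p) *ᵥ v) ≥ -(_root_.enorm p) * ∑ i, v i ^ 2 := by
  set m := _root_.enorm p with hm
  set a := p (Fin.last (n + 1)) with ha
  set t := v (Fin.last (n + 1)) with ht
  have hm0 : 0 ≤ m := Real.sqrt_nonneg _
  have hm2 : m ^ 2 = ∑ i, p i ^ 2 := Real.sq_sqrt (Finset.sum_nonneg fun i _ => sq_nonneg _)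
  have ha2 : a ^ 2 ≤ ∑ i, p i ^ 2 :=
    Finset.single_le_sum (fun i _ => sq_nonneg (p i)) (Finset.mem_univ _)
  have ham : a ≤ m := by nlinarith
  set Su := ∑ i : Fin (n + 1), v i.castSucc ^ 2 with hSu
  set cu := ∑ i : Fin (n + 1), p i.castSucc * v i.castSucc with hcu
  set Pq := ∑ i : Fin (n + 1), p i.castSucc ^ 2 with hPqdef
  have hPq : Pq = m ^ 2 - a ^ 2 := by
    rw [hm2, Fin.sum_univ_castSucc (f := fun i => p i ^ 2)]; ring
  rw [Kmat_quadForm, Fin.sum_univ_castSucc (f := fun j => p j * v j),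
    Fin.sum_univ_castSucc (f := fun i => v i ^ 2)]
  rw [← hSu, ← hcu, ← ha, ← ht]
  have hSOS : 0 ≤ ∑ i : Fin (n + 1), ((m - a) * v i.castSucc + t * p i.castSucc) ^ 2 :=
    Finset.sum_nonneg fun i _ => sq_nonneg _
  have hexp : ∑ i : Fin (n + 1), ((m - a) * v i.castSucc + t * p i.castSucc) ^ 2
      = (m - a) ^ 2 * Su + 2 * (m - a) * t * cu + t ^ 2 * Pq := by
    rw [hSu, hcu, hPqdef, Finset.mul_sum, Finset.mul_sum, Finset.mul_sum,
      ← Finset.sum_add_distrib, ← Finset.sum_add_distrib]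
    exact Finset.sum_congr rfl fun i _ => by ring
  rcases eq_or_lt_of_le ham with heq | hlt
  · have hPq0 : Pq = 0 := by rw [hPq, ← heq]; ring
    have hq : ∀ i : Fin (n + 1), p i.castSucc = 0 := by
      intro i
      have := (Finset.sum_eq_zero_iff_of_nonneg
        (fun i (_ : i ∈ Finset.univ) => sq_nonneg (p i.castSucc))).mp hPq0 i (Finset.mem_univ i)
      exact pow_eq_zero_iff (two_ne_zero) |>.mp this
    have hcu0 : cu = 0 := Finset.sum_eq_zero fun i _ => by rw [hq i]; ring
    have hSu0 : 0 ≤ Su := Finset.sum_nonneg fun i _ => sq_nonneg _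
    have hrw : 2 * t * (cu + a * t) - a * (Su + t ^ 2) = -m * (Su + t ^ 2) + 2 * m * t ^ 2 := by
      rw [hcu0, heq]; ring
    rw [ge_iff_le, hrw]
    have := mul_nonneg hm0 (sq_nonneg t)
    linarith
  · have hma : 0 < m - a := by linarith
    have hkey : (m - a) * (2 * t * (cu + a * t) - a * (Su + t ^ 2) + m * (Su + t ^ 2))
        = (m - a) ^ 2 * Su + 2 * (m - a) * t * cu + t ^ 2 * Pq := by
      rw [hPq]; ring
    have h2 : 0 ≤ (m - a) * (2 * t * (cu + a * t) - a * (Su + t ^ 2) + m * (Su + t ^ 2)) := by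
      rw [hkey, ← hexp]; exact hSOS
    have h3 := (mul_nonneg_iff_of_pos_left hma).mp h2
    linarith

lemma Kmat_eigenvalues_ge {n : ℕ} (p : Fin (n + 2) → ℝ) (hK : (Kmat p).IsHermitian)
    (i : Fin (n + 2)) : -(_root_.enorm p) ≤ hK.eigenvalues i := by
  have hv := hK.eigenvalues_eq i
  set w : Fin (n + 2) → ℝ := (WithLp.equiv 2 _) (hK.eigenvectorBasis i) with hw
  have hnorm : ‖hK.eigenvectorBasis i‖ = 1 := hK.eigenvectorBasis.orthonormal.1 i
  have hsum : ∑ j, w j ^ 2 = 1 := by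
    have := EuclideanSpace.norm_eq (hK.eigenvectorBasis i)
    rw [hnorm] at this
    have h2 : ∑ j, ‖hK.eigenvectorBasis i j‖ ^ 2 = 1 := by
      have hnn : 0 ≤ ∑ j, ‖hK.eigenvectorBasis i j‖ ^ 2 :=
        Finset.sum_nonneg fun j _ => sq_nonneg _
      nlinarith [Real.sq_sqrt hnn, this.symm]
    simpa [Real.norm_eq_abs, sq_abs, hw] using h2
  have heig : hK.eigenvalues i = w ⬝ᵥ ((Kmat p) *ᵥ w) := by
    simpa [star_trivial, hw] using hv
  rw [heig]
  calc -(_root_.enorm p) = -(_root_.enorm p) * ∑ j, w j ^ 2 := by rw [hsum]; ring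
    _ ≤ w ⬝ᵥ ((Kmat p) *ᵥ w) := Kmat_quadForm_ge p w

lemma Kmat_exists_nonneg_eigenvalue {n : ℕ} (p : Fin (n + 2) → ℝ)
    (hK : (Kmat p).IsHermitian) : ∃ i, 0 ≤ hK.eigenvalues i := by
  by_contra hcon
  push_neg at hcon
  have hPSD : (-(Kmat p)).PosSemidef := by
    have hneg : -(Kmat p) = (hK.eigenvectorUnitary : Matrix _ _ ℝ) *
        Matrix.diagonal (-hK.eigenvalues) *
        (star (hK.eigenvectorUnitary : Matrix _ _ ℝ)) := by
      conv_lhs => rw [hK.spectral_theorem]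
      rw [show Matrix.diagonal (-hK.eigenvalues) = -Matrix.diagonal hK.eigenvalues by
        rw [Matrix.diagonal_neg]; rfl]
      rw [Matrix.mul_neg, Matrix.neg_mul]
      simp only [RCLike.ofReal_real_eq_id, Function.id_comp, Unitary.conjStarAlgAut_apply]
    rw [hneg, Matrix.star_eq_conjTranspose]
    refine Matrix.PosSemidef.mul_mul_conjTranspose_same ?_ _
    exact Matrix.PosSemidef.diagonal (fun i => neg_nonneg.2 (hcon i).le)
  have hdiag : ∀ j, 0 ≤ -(Kmat p j j) := by
    intro j
    have := hPSD.diag_nonneg (i := j)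
    simpa [Matrix.mulVec, dotProduct, Pi.single_apply] using this
  have h00 := hdiag 0
  have hlast := hdiag (Fin.last (n + 1))
  have h0ne : (0 : Fin (n + 2)) ≠ Fin.last (n + 1) := by
    simp [Fin.ext_iff]
  have ha0 : p (Fin.last (n + 1)) = 0 := by
    simp [Kmat, h0ne] at h00 hlast
    linarith
  have htr : ∑ i, hK.eigenvalues i = (Kmat p).trace := by
    conv_rhs => rw [hK.spectral_theorem]
    rw [Unitary.conjStarAlgAut_apply, Matrix.trace_mul_cycle, Unitary.coe_star_mul_self, one_mul, Matrix.trace_diagonal]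
    simp
  have htr0 : (Kmat p).trace = 0 := by
    rw [Matrix.trace]
    rw [Finset.sum_eq_zero]
    intro i _
    by_cases hi : i = Fin.last (n + 1) <;> simp [Matrix.diag, Kmat, hi, ha0]
  have hlt : ∑ i, hK.eigenvalues i < 0 := by
    have := Finset.sum_lt_sum_of_nonempty Finset.univ_nonempty (fun i _ => hcon i)
    simpa using this
  rw [htr, htr0] at hlt
  exact lt_irrefl _ hlt


/-- Pucci minimal bound: `M⁻(K(p)) ≥ -Λ(N-1)|p|`, where
`M⁻(M) = λ·(sum of positive eigenvalues) + Λ·(sum of negative eigenvalues)`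
and `N = n + 2`. -/
theorem pucciMin_Kmat_lower_bound (n : ℕ) (lam Lam : ℝ) (h0 : 0 < lam)
    (hlL : lam ≤ Lam) (p : Fin (n + 2) → ℝ) (hK : (Kmat p).IsHermitian) :
    lam * ∑ i, max (hK.eigenvalues i) 0 + Lam * ∑ i, min (hK.eigenvalues i) 0
      ≥ -(Lam * (n + 1) * _root_.enorm p) := by
  have hm0 : 0 ≤ _root_.enorm p := Real.sqrt_nonneg _
  have hmax : 0 ≤ ∑ i, max (hK.eigenvalues i) 0 :=
    Finset.sum_nonneg fun i _ => le_max_right _ _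
  obtain ⟨i₀, hi₀⟩ := Kmat_exists_nonneg_eigenvalue p hK
  have hmin : -(((n : ℝ) + 1) * _root_.enorm p) ≤ ∑ i, min (hK.eigenvalues i) 0 := by
    have hsplit : ∑ i, min (hK.eigenvalues i) 0
        = min (hK.eigenvalues i₀) 0 + ∑ i ∈ Finset.univ.erase i₀, min (hK.eigenvalues i) 0 :=
      (Finset.add_sum_erase _ _ (Finset.mem_univ i₀)).symm
    have h1 : min (hK.eigenvalues i₀) 0 = 0 := min_eq_right hi₀
    have h2 : ∀ i ∈ Finset.univ.erase i₀, -(_root_.enorm p) ≤ min (hK.eigenvalues i) 0 := fun i _ =>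
      le_min (Kmat_eigenvalues_ge p hK i) (neg_nonpos.2 hm0)
    have h3 := Finset.card_nsmul_le_sum _ _ _ h2
    have hcard : (Finset.univ.erase i₀).card = n + 1 := by
      rw [Finset.card_erase_of_mem (Finset.mem_univ _)]
      simp
    rw [hcard, nsmul_eq_mul] at h3
    push_cast at h3
    rw [hsplit, h1]
    linarith
  have hLam0 : (0 : ℝ) ≤ Lam := le_trans h0.le hlL
  have hA : 0 ≤ lam * ∑ i, max (hK.eigenvalues i) 0 := mul_nonneg h0.le hmax
  have hB : Lam * (-(((n : ℝ) + 1) * _root_.enorm p)) ≤ Lam * ∑ i, min (hK.eigenvalues i) 0 :=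
    mul_le_mul_of_nonneg_left hmin hLam0
  have hE : -(Lam * ((n : ℝ) + 1) * _root_.enorm p) = Lam * (-(((n : ℝ) + 1) * _root_.enorm p)) := by ring
  rw [ge_iff_le, hE]
  linarith
end
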